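/- The category of semialgebras for the nonempty-list (semigroup) monad on Set is isomorphic to the category of sets X equipped with a unary operation a and an associative binary operation · satisfying a(a(x)) = a(x), a(x·y) = x·y, and a(x)·a(y) = x·y, with homomorphisms preserving both operations. The semialgebra f : X⁺ → X corresponds to a(x) = f[x], x·y = f[x,y], and conversely (X, a, ·) yields f[x₁,…,xₙ] = a(x₁)·⋯·a(xₙ). -/

import Mathlib

open CategoryTheory

universe u

/-- Nonempty lists over `X`, encoded as a head together with a tail. -/
def NEL (X : Type u) : Type u := X × List X

/-- Functorial action of the nonempty-list functor. -/
def NEL.map {X Y : Type u} (f : X → Y) : NEL X → NEL Y :=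
  fun w => (f w.1, w.2.map f)

/-- Flattening (concatenation), the multiplication of the nonempty-list monad. -/
def NEL.flat {X : Type u} : NEL (NEL X) → NEL X :=
  fun W => (W.1.1, W.1.2 ++ W.2.flatMap (fun q => q.1 :: q.2))

/-- A semialgebra for the nonempty-list (semigroup) monad on `Set`:
`f : X⁺ → X` with `f ∘ map f = f ∘ flatten`. -/
structure SgSemiAlg : Type (u + 1) where
  X : Type u
  f : NEL X → X
  law : ∀ W : NEL (NEL X), f (NEL.map f W) = f (NEL.flat W)

instance : Category SgSemiAlg.{u} where
  Hom A B := { h : A.X → B.X // ∀ w, h (A.f w) = B.f (NEL.map h w) }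
  id A := ⟨id, by intro w; cases w; simp [NEL.map]⟩
  comp {A B D} f g := ⟨g.1 ∘ f.1, by
    intro w
    simp only [Function.comp_apply, f.2, g.2]
    cases w
    simp [NEL.map]⟩
  id_comp f := rfl
  comp_id f := rfl
  assoc f g h := rfl

/-- A set with a unary operation `a` and an associative binary operation `·`
satisfying `a (a x) = a x`, `a (x·y) = x·y` and `a x · a y = x·y`. -/
structure SgAlg : Type (u + 1) where
  X : Type u
  a : X → X
  mul : X → X → X
  idem : ∀ x, a (a x) = a x
  absorb : ∀ x y, a (mul x y) = mul x y
  mul_a : ∀ x y, mul (a x) (a y) = mul x y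
  assoc : ∀ x y z, mul (mul x y) z = mul x (mul y z)

instance : Category SgAlg.{u} where
  Hom A B := { h : A.X → B.X //
    (∀ x, h (A.a x) = B.a (h x)) ∧ ∀ x y, h (A.mul x y) = B.mul (h x) (h y) }
  id A := ⟨id, fun _ => rfl, fun _ _ => rfl⟩
  comp {A B D} f g := ⟨g.1 ∘ f.1, by
    refine ⟨fun x => ?_, fun x y => ?_⟩ <;> simp [f.2.1, g.2.1, f.2.2, g.2.2]⟩
  id_comp f := rfl
  comp_id f := rfl
  assoc f g h := rfl

namespace SgAux

/-! ### Extensionality for the two structures -/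

theorem SgSemiAlg.ext' {A B : SgSemiAlg.{u}} (hX : A.X = B.X) (hf : HEq A.f B.f) :
    A = B := by
  cases A; cases B
  dsimp at hX hf
  subst hX
  subst hf
  rfl

theorem SgAlg.ext' {A B : SgAlg.{u}} (hX : A.X = B.X) (ha : HEq A.a B.a)
    (hm : HEq A.mul B.mul) : A = B := by
  cases A; cases B
  dsimp at hX ha hm
  subst hX; subst ha; subst hm
  rfl

theorem semiHom_hext {A A' B B' : SgSemiAlg.{u}} (hA : A = A') (hB : B = B')
    (f : A ⟶ B) (g : A' ⟶ B') (h : HEq f.1 g.1) : HEq f g := by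
  subst hA; subst hB
  exact heq_of_eq (Subtype.ext (eq_of_heq h))

theorem algHom_hext {A A' B B' : SgAlg.{u}} (hA : A = A') (hB : B = B')
    (f : A ⟶ B) (g : A' ⟶ B') (h : HEq f.1 g.1) : HEq f g := by
  subst hA; subst hB
  exact heq_of_eq (Subtype.ext (eq_of_heq h))

/-! ### From a semialgebra to an algebra -/

/-- `mul (mul x y) (a z) = mul (a x) (mul y z)` key instance of the law. -/
theorem semi_key (A : SgSemiAlg.{u}) (x y z : A.X) :
    A.f (A.f (x, [y]), [A.f (z, [])]) = A.f (A.f (x, []), [A.f (y, [z])]) := by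
  have h1 := A.law ((x, [y]), [(z, [])])
  have h2 := A.law ((x, []), [(y, [z])])
  simp [NEL.map, NEL.flat] at h1 h2
  exact h1.trans h2.symm

def toAlg (A : SgSemiAlg.{u}) : SgAlg.{u} where
  X := A.X
  a := fun x => A.f (x, [])
  mul := fun x y => A.f (x, [y])
  idem := fun x => by
    have := A.law ((x, []), []); simpa [NEL.map, NEL.flat] using this
  absorb := fun x y => by
    have := A.law ((x, [y]), []); simpa [NEL.map, NEL.flat] using this
  mul_a := fun x y => by
    have := A.law ((x, []), [(y, [])]); exact this
  assoc := fun x y z => by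
    have habs : ∀ p q : A.X, A.f (A.f (p, [q]), []) = A.f (p, [q]) := fun p q => by
      have := A.law ((p, [q]), []); simpa [NEL.map, NEL.flat] using this
    have hma : ∀ p q : A.X, A.f (A.f (p, []), [A.f (q, [])]) = A.f (p, [q]) :=
      fun p q => by
        have := A.law ((p, []), [(q, [])]); exact this
    calc A.f (A.f (x, [y]), [z])
        = A.f (A.f (A.f (x, [y]), []), [A.f (z, [])]) := (hma _ _).symm
      _ = A.f (A.f (x, [y]), [A.f (z, [])]) := by rw [habs]
      _ = A.f (A.f (x, []), [A.f (y, [z])]) := semi_key A x y z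
      _ = A.f (A.f (x, []), [A.f (A.f (y, [z]), [])]) := by rw [habs]
      _ = A.f (x, [A.f (y, [z])]) := hma _ _

/-! ### From an algebra to a semialgebra -/

theorem foldl_mul (B : SgAlg.{u}) (l : List B.X) :
    ∀ c d : B.X, B.mul c (l.foldl B.mul d) = l.foldl B.mul (B.mul c d) := by
  induction l with
  | nil => intro c d; rfl
  | cons y ys ih =>
      intro c d
      simp only [List.foldl_cons]
      rw [ih, B.assoc]

theorem a_foldl_mul (B : SgAlg.{u}) (l : List B.X) :
    ∀ x y : B.X, B.a (l.foldl B.mul (B.mul x y)) = l.foldl B.mul (B.mul x y) := by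
  induction l with
  | nil => intro x y; exact B.absorb x y
  | cons z zs ih => intro x y; simpa using ih (B.mul x y) z

/-- `a` absorbs values of the fold. -/
theorem a_gfold (B : SgAlg.{u}) (w : NEL B.X) :
    B.a ((w.2.map B.a).foldl B.mul (B.a w.1)) = (w.2.map B.a).foldl B.mul (B.a w.1) := by
  obtain ⟨x, l⟩ := w
  cases l with
  | nil => exact B.idem x
  | cons y ys => simpa using a_foldl_mul B (ys.map B.a) (B.a x) (B.a y)

theorem gfold_flat_key (B : SgAlg.{u}) (L : List (NEL B.X)) :
    ∀ c : B.X,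
      (L.map (fun w : NEL B.X => (w.2.map B.a).foldl B.mul (B.a w.1))).foldl B.mul c
        = ((L.flatMap (fun q => q.1 :: q.2)).map B.a).foldl B.mul c := by
  induction L with
  | nil => intro c; rfl
  | cons q L ih =>
      intro c
      obtain ⟨y, m⟩ := q
      erw [List.map_cons, List.foldl_cons, List.flatMap_cons, List.map_append,
        List.foldl_append]
      rw [ih, foldl_mul]
      rfl

def toSemi (B : SgAlg.{u}) : SgSemiAlg.{u} where
  X := B.X
  f := fun w => (w.2.map B.a).foldl B.mul (B.a w.1)
  law := by
    rintro ⟨⟨x, l⟩, L⟩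
    set g : NEL B.X → B.X := fun w => (w.2.map B.a).foldl B.mul (B.a w.1) with hg
    show ((L.map g).map B.a).foldl B.mul (B.a (g (x, l)))
        = (((l ++ L.flatMap (fun q => q.1 :: q.2)).map B.a)).foldl B.mul (B.a x)
    rw [a_gfold B (x, l), List.map_map,
      show B.a ∘ g = g from funext fun w => a_gfold B w,
      List.map_append, List.foldl_append]
    exact gfold_flat_key B L _

/-! ### Round trips -/

theorem toSemi_toAlg (A : SgSemiAlg.{u}) : toSemi (toAlg A) = A := by
  refine SgSemiAlg.ext' rfl (heq_of_eq (funext ?_))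
  rintro ⟨x, l⟩
  show (toSemi (toAlg A)).f (x, l) = A.f (x, l)
  induction l using List.reverseRecOn with
  | nil => rfl
  | append_singleton l y ih =>
      have hstep := A.law ((x, l), [(y, [])])
      simp [NEL.map, NEL.flat] at hstep
      show ((l ++ [y]).map (toAlg A).a).foldl (toAlg A).mul ((toAlg A).a x) = _
      erw [List.map_append, List.foldl_append, ← hstep]
      show (toAlg A).mul ((toSemi (toAlg A)).f (x, l)) ((toAlg A).a y) = _
      rw [ih]
      rfl

theorem toAlg_toSemi (B : SgAlg.{u}) : toAlg (toSemi B) = B := by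
  refine SgAlg.ext' rfl (heq_of_eq rfl) (heq_of_eq (funext fun x => funext fun y => ?_))
  show B.mul (B.a x) (B.a y) = B.mul x y
  exact B.mul_a x y

/-! ### Functors -/

def F : SgSemiAlg.{u} ⥤ SgAlg.{u} where
  obj := toAlg
  map {A B} h := ⟨h.1, fun x => h.2 (x, []), fun x y => h.2 (x, [y])⟩
  map_id _ := rfl
  map_comp _ _ := rfl

def G : SgAlg.{u} ⥤ SgSemiAlg.{u} where
  obj := toSemi
  map {A B} h := ⟨h.1, by
    rintro ⟨x, l⟩
    show h.1 ((l.map A.a).foldl A.mul (A.a x))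
        = ((l.map h.1).map B.a).foldl B.mul (B.a (h.1 x))
    have hfold : ∀ (l : List A.X) (c : A.X),
        h.1 (l.foldl A.mul c) = (l.map h.1).foldl B.mul (h.1 c) := by
      intro l
      induction l with
      | nil => intro c; rfl
      | cons z zs ih => intro c; simp only [List.foldl_cons, List.map_cons]; rw [ih, h.2.2]
    erw [hfold, List.map_map, List.map_map,
      show h.1 ∘ A.a = B.a ∘ h.1 from funext fun z => h.2.1 z, h.2.1]⟩
  map_id _ := rfl
  map_comp _ _ := rfl

end SgAux

/-- The category of semialgebras for the nonempty-list (semigroup) monad on `Set`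
is isomorphic to the category of sets with an idempotent-style unary operation `a`
and an associative binary operation `·` satisfying the listed equations; the
semialgebra `f` corresponds to `a x = f[x]`, `x·y = f[x,y]`, and conversely
`(X, a, ·)` yields `f[x₁,…,xₙ] = a x₁ · ⋯ · a xₙ`. -/
theorem sgSemiAlg_iso_sgAlg :
    ∃ e : Cat.of SgSemiAlg.{u} ≅ Cat.of SgAlg.{u},
      (∀ A : SgSemiAlg.{u},
        (e.hom.toFunctor.obj A).X = A.X ∧
        HEq (e.hom.toFunctor.obj A).a (fun x : A.X => A.f (x, [])) ∧
        HEq (e.hom.toFunctor.obj A).mul (fun x y : A.X => A.f (x, [y]))) ∧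
      (∀ B : SgAlg.{u},
        (e.inv.toFunctor.obj B).X = B.X ∧
        HEq (e.inv.toFunctor.obj B).f
          (fun w : NEL B.X => (w.2.map B.a).foldl B.mul (B.a w.1))) := by
  refine ⟨⟨SgAux.F.toCatHom, SgAux.G.toCatHom, ?_, ?_⟩, fun A => ⟨rfl, HEq.rfl, HEq.rfl⟩,
    fun B => ⟨rfl, HEq.rfl⟩⟩
  · apply Cat.Hom.ext
    show SgAux.F ⋙ SgAux.G = 𝟭 _
    apply CategoryTheory.Functor.hext
    · intro A; exact SgAux.toSemi_toAlg A
    · intro A B h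
      exact SgAux.semiHom_hext (SgAux.toSemi_toAlg A) (SgAux.toSemi_toAlg B) _ _ HEq.rfl
  · apply Cat.Hom.ext
    show SgAux.G ⋙ SgAux.F = 𝟭 _
    apply CategoryTheory.Functor.hext
    · intro B; exact SgAux.toAlg_toSemi B
    · intro A B h
      exact SgAux.algHom_hext (SgAux.toAlg_toSemi A) (SgAux.toAlg_toSemi B) _ _ HEq.rfl
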